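/- In the two-sample binary-IV setting, assume additionally structural invariance of the exposure equation, f^a = f^b = f, and sampling homogeneity of the exposure noise: v^a and v^b have the same distribution on V. Then P(C^a) = P(C^b), and consequently, if P(C^b) > 0, the two-sample Wald ratio equals the local average treatment effect in sample b: β^{ab} := (E[y^b | z^b = 1] − E[y^b | z^b = 0])/(E[x^a | z^a = 1] − E[x^a | z^a = 0]) = E[g^b(1, u^b) − g^b(0, u^b) | C^b]. -/

import Mathlib

open MeasureTheory ProbabilityTheory

/-- Conditional expectation of a real random variable given an event:
`E[Y | E] = E[Y·1_E]/P(E)`. -/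
noncomputable def cexp {Ωs : Type*} [MeasurableSpace Ωs] (μ : Measure Ωs)
    (Y : Ωs → ℝ) (E : Set Ωs) : ℝ :=
  (∫ ω in E, Y ω ∂μ) / (μ E).toReal

lemma cexp_eq_integral_of_indep {Ω W : Type*} [MeasurableSpace Ω] [MeasurableSpace W]
    (μ : Measure Ω) [IsProbabilityMeasure μ]
    (z : Ω → Bool) (hz : Measurable z) (T : Ω → W) (hT : Measurable T)
    (hind : IndepFun z T μ) (H : W → ℝ) (hH : Measurable H)
    (c : Bool) (hc : μ {ω | z ω = c} ≠ 0) :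
    cexp μ (fun ω => H (T ω)) {ω | z ω = c} = ∫ ω, H (T ω) ∂μ := by
  have hE : MeasurableSet {ω | z ω = c} := hz (measurableSet_singleton c)
  have hXind : IndepFun (fun ω => if z ω = c then (1:ℝ) else 0) (fun ω => H (T ω)) μ :=
    hind.comp (Measurable.of_discrete (f := fun b : Bool => if b = c then (1:ℝ) else 0)) hH
  have h1 : (∫ ω in {ω | z ω = c}, H (T ω) ∂μ)
      = ∫ ω, (if z ω = c then (1:ℝ) else 0) * H (T ω) ∂μ := by
    rw [← integral_indicator hE]
    congr 1
    ext ω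
    by_cases h : z ω = c <;> simp [Set.indicator, h]
  have h2 : (∫ ω, (if z ω = c then (1:ℝ) else 0) ∂μ) = (μ {ω | z ω = c}).toReal := by
    rw [show (fun ω => if z ω = c then (1:ℝ) else 0)
        = Set.indicator {ω | z ω = c} (fun _ => (1:ℝ)) by
      ext ω; by_cases h : z ω = c <;> simp [Set.indicator, h]]
    rw [integral_indicator_const (1:ℝ) hE]; simp [Measure.real]
  have h3 := IndepFun.integral_fun_mul_eq_mul_integral hXind
    ((Measurable.of_discrete (f := fun b : Bool => if b = c then (1:ℝ) else 0)).comp hz).aestronglyMeasurable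
    ((hH.comp hT)).aestronglyMeasurable
  have htr : (μ {ω | z ω = c}).toReal ≠ 0 :=
    ENNReal.toReal_ne_zero.mpr ⟨hc, measure_ne_top _ _⟩
  rw [cexp, h1, h3, h2]; field_simp

theorem two_sample_wald_ratio_identifies_late
    {Ωa Ωb V U : Type*} [MeasurableSpace Ωa] [MeasurableSpace Ωb]
    [MeasurableSpace V] [MeasurableSpace U]
    -- common exposure equation (structural invariance)
    (f : Bool → V → Bool) (hfmeas : ∀ b, Measurable (f b))
    -- sample a
    (μa : Measure Ωa) [IsProbabilityMeasure μa]
    (za : Ωa → Bool) (hzameas : Measurable za)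
    (va : Ωa → V) (hvameas : Measurable va)
    (ua : Ωa → U) (huameas : Measurable ua)
    (ga : Bool → U → ℝ) (hgameas : ∀ b, Measurable (ga b))
    (hgaint : ∀ b, Integrable (fun ω => ga b (ua ω)) μa)
    (hindepa : IndepFun za (fun ω => (ua ω, va ω)) μa)
    (hmonoa : ∀ w : V, f false w = true → f true w = true)
    (hza1 : 0 < μa {ω | za ω = true}) (hza0 : 0 < μa {ω | za ω = false})
    (xa : Ωa → ℝ) (hxa : xa = fun ω => if f (za ω) (va ω) then (1 : ℝ) else 0)
    (Ca : Set Ωa) (hCa : Ca = {ω | f false (va ω) = false ∧ f true (va ω) = true})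
    -- sample b
    (μb : Measure Ωb) [IsProbabilityMeasure μb]
    (zb : Ωb → Bool) (hzbmeas : Measurable zb)
    (vb : Ωb → V) (hvbmeas : Measurable vb)
    (ub : Ωb → U) (hubmeas : Measurable ub)
    (gb : Bool → U → ℝ) (hgbmeas : ∀ b, Measurable (gb b))
    (hgbint : ∀ b, Integrable (fun ω => gb b (ub ω)) μb)
    (hindepb : IndepFun zb (fun ω => (ub ω, vb ω)) μb)
    (hzb1 : 0 < μb {ω | zb ω = true}) (hzb0 : 0 < μb {ω | zb ω = false})
    (yb : Ωb → ℝ) (hyb : yb = fun ω => gb (f (zb ω) (vb ω)) (ub ω))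
    (Cb : Set Ωb) (hCb : Cb = {ω | f false (vb ω) = false ∧ f true (vb ω) = true})
    -- sampling homogeneity of the exposure noise
    (hvid : IdentDistrib va vb μa μb)
    -- two-sample Wald ratio
    (βab : ℝ)
    (hβab : βab = (cexp μb yb {ω | zb ω = true} - cexp μb yb {ω | zb ω = false}) /
      (cexp μa xa {ω | za ω = true} - cexp μa xa {ω | za ω = false})) :
    μa Ca = μb Cb ∧
    (0 < μb Cb →
      βab = cexp μb (fun ω => gb true (ub ω) - gb false (ub ω)) Cb) := by
  -- the complier set in V
  set S : Set V := {w | f false w = false ∧ f true w = true} with hS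
  have hSmeas : MeasurableSet S :=
    ((hfmeas false) (measurableSet_singleton false)).inter
      ((hfmeas true) (measurableSet_singleton true))
  have hCaS : Ca = va ⁻¹' S := by rw [hCa]; rfl
  have hCbS : Cb = vb ⁻¹' S := by rw [hCb]; rfl
  have hPC : μa Ca = μb Cb := by
    rw [hCaS, hCbS]; exact hvid.measure_mem_eq hSmeas
  refine ⟨hPC, fun hpos => ?_⟩
  have hCbmeas : MeasurableSet Cb := hCbS ▸ hvbmeas hSmeas
  have hCameas : MeasurableSet Ca := hCaS ▸ hvameas hSmeas
  -- sample b structure functions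
  have hTbmeas : Measurable (fun ω : Ωb => (ub ω, vb ω)) := hubmeas.prodMk hvbmeas
  have hHmeas : ∀ c : Bool, Measurable (fun p : U × V => gb (f c p.2) p.1) := by
    intro c
    have : (fun p : U × V => gb (f c p.2) p.1)
        = fun p => if f c p.2 = true then gb true p.1 else gb false p.1 := by
      funext p; cases h : f c p.2 <;> simp [h]
    rw [this]
    exact Measurable.ite (((hfmeas c).comp measurable_snd) (measurableSet_singleton true))
      ((hgbmeas true).comp measurable_fst) ((hgbmeas false).comp measurable_fst)
  -- integrability of H_c ∘ Tb
  have hHint : ∀ c : Bool, Integrable (fun ω => gb (f c (vb ω)) (ub ω)) μb := by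
    intro c
    have hA : MeasurableSet {ω : Ωb | f c (vb ω) = true} :=
      (hvbmeas ((hfmeas c) (measurableSet_singleton true)))
    have heq : (fun ω => gb (f c (vb ω)) (ub ω))
        = (fun ω => Set.indicator {ω : Ωb | f c (vb ω) = true} (fun ω => gb true (ub ω)) ω
            + Set.indicator {ω : Ωb | f c (vb ω) = true}ᶜ (fun ω => gb false (ub ω)) ω) := by
      funext ω
      by_cases h : f c (vb ω) = true
      · simp [Set.indicator, h]
      · simp only [Bool.not_eq_true] at h
        simp [Set.indicator, h]
    rw [heq]
    exact (((hgbint true).indicator hA)).add (((hgbint false).indicator hA.compl))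
  -- conditional expectations of yb
  have hyeq : ∀ c : Bool, cexp μb yb {ω | zb ω = c} = ∫ ω, gb (f c (vb ω)) (ub ω) ∂μb := by
    intro c
    have hE : MeasurableSet {ω : Ωb | zb ω = c} := hzbmeas (measurableSet_singleton c)
    have hnum : (∫ ω in {ω | zb ω = c}, yb ω ∂μb)
        = ∫ ω in {ω | zb ω = c}, gb (f c (vb ω)) (ub ω) ∂μb := by
      refine setIntegral_congr_fun hE fun ω hω => ?_
      have : zb ω = c := hω
      rw [hyb]; simp only [this]
    have hcz : μb {ω | zb ω = c} ≠ 0 := by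
      cases c
      · exact hzb0.ne'
      · exact hzb1.ne'
    rw [show cexp μb yb {ω | zb ω = c}
        = cexp μb (fun ω => gb (f c (vb ω)) (ub ω)) {ω | zb ω = c} from by
      unfold cexp; rw [hnum]]
    simpa using cexp_eq_integral_of_indep μb zb hzbmeas (fun ω => (ub ω, vb ω)) hTbmeas
      hindepb (fun p : U × V => gb (f c p.2) p.1) (hHmeas c) c hcz
  -- numerator
  have hdiffint : Integrable (fun ω => gb true (ub ω) - gb false (ub ω)) μb :=
    (hgbint true).sub (hgbint false)
  have hnum : cexp μb yb {ω | zb ω = true} - cexp μb yb {ω | zb ω = false}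
      = ∫ ω in Cb, (gb true (ub ω) - gb false (ub ω)) ∂μb := by
    rw [hyeq true, hyeq false, ← integral_sub (hHint true) (hHint false)]
    rw [← integral_indicator hCbmeas]
    congr 1
    funext ω
    by_cases h0 : f false (vb ω) = true
    · have h1 : f true (vb ω) = true := hmonoa _ h0
      have : ω ∉ Cb := by rw [hCb]; simp [h0, h1]
      simp [h0, h1, Set.indicator, this]
    · simp only [Bool.not_eq_true] at h0
      by_cases h1 : f true (vb ω) = true
      · have : ω ∈ Cb := by rw [hCb]; exact ⟨h0, h1⟩
        simp [h0, h1, Set.indicator, this]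
      · simp only [Bool.not_eq_true] at h1
        have : ω ∉ Cb := by rw [hCb]; simp [h0, h1]
        simp [h0, h1, Set.indicator, this]
  -- sample a structure
  have hTameas : Measurable (fun ω : Ωa => (ua ω, va ω)) := huameas.prodMk hvameas
  have hKmeas : ∀ c : Bool, Measurable (fun p : U × V => if f c p.2 then (1:ℝ) else 0) := by
    intro c
    exact Measurable.ite (((hfmeas c).comp measurable_snd) (measurableSet_singleton true))
      measurable_const measurable_const
  have hKint : ∀ c : Bool, Integrable (fun ω : Ωa => if f c (va ω) then (1:ℝ) else 0) μa := by
    intro c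
    have hA : MeasurableSet {ω : Ωa | f c (va ω) = true} :=
      (hvameas ((hfmeas c) (measurableSet_singleton true)))
    have heq : (fun ω : Ωa => if f c (va ω) then (1:ℝ) else 0)
        = Set.indicator {ω : Ωa | f c (va ω) = true} (fun _ => (1:ℝ)) := by
      funext ω; by_cases h : f c (va ω) = true <;> simp [Set.indicator, h]
    rw [heq]
    exact (integrable_const (1:ℝ)).indicator hA
  have hxeq : ∀ c : Bool, cexp μa xa {ω | za ω = c}
      = ∫ ω, (if f c (va ω) then (1:ℝ) else 0) ∂μa := by
    intro c
    have hE : MeasurableSet {ω : Ωa | za ω = c} := hzameas (measurableSet_singleton c)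
    have hnum : (∫ ω in {ω | za ω = c}, xa ω ∂μa)
        = ∫ ω in {ω | za ω = c}, (if f c (va ω) then (1:ℝ) else 0) ∂μa := by
      refine setIntegral_congr_fun hE fun ω hω => ?_
      have : za ω = c := hω
      rw [hxa]; simp only [this]
    have hcz : μa {ω | za ω = c} ≠ 0 := by
      cases c
      · exact hza0.ne'
      · exact hza1.ne'
    rw [show cexp μa xa {ω | za ω = c}
        = cexp μa (fun ω => if f c (va ω) then (1:ℝ) else 0) {ω | za ω = c} from by
      unfold cexp; rw [hnum]]
    simpa using cexp_eq_integral_of_indep μa za hzameas (fun ω => (ua ω, va ω)) hTameas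
      hindepa (fun p : U × V => if f c p.2 then (1:ℝ) else 0) (hKmeas c) c hcz
  have hden : cexp μa xa {ω | za ω = true} - cexp μa xa {ω | za ω = false}
      = (μa Ca).toReal := by
    rw [hxeq true, hxeq false, ← integral_sub (hKint true) (hKint false)]
    have heq : (fun ω : Ωa => (if f true (va ω) then (1:ℝ) else 0)
        - (if f false (va ω) then (1:ℝ) else 0)) = Ca.indicator (fun _ => (1:ℝ)) := by
      funext ω
      by_cases h0 : f false (va ω) = true
      · have h1 : f true (va ω) = true := hmonoa _ h0
        have : ω ∉ Ca := by rw [hCa]; simp [h0, h1]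
        simp [h0, h1, Set.indicator, this]
      · simp only [Bool.not_eq_true] at h0
        by_cases h1 : f true (va ω) = true
        · have : ω ∈ Ca := by rw [hCa]; exact ⟨h0, h1⟩
          simp [h0, h1, Set.indicator, this]
        · simp only [Bool.not_eq_true] at h1
          have : ω ∉ Ca := by rw [hCa]; simp [h0, h1]
          simp [h0, h1, Set.indicator, this]
    rw [heq, integral_indicator_const (1:ℝ) hCameas]; simp [Measure.real]
  rw [hβab, hnum, hden, hPC, cexp]
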